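/- Let Γ = (V,E) be a finite connected graph, {α,β} ∈ E, G ≤ Aut(Γ), and G* = ⟨G_α, G_β⟩. Assume G_α acts transitively on Γ(α) and G_β acts transitively on Γ(β). Then: (a) Γ is G*-locally arc-transitive; (b) Γ is G*-locally primitive if and only if G_α acts primitively on Γ(α) and G_β acts primitively on Γ(β); (c) either Γ is not bipartite, G = G* and G is transitive on V, or Γ is bipartite with the two parts of the bipartition equal to the two orbits of G* on V, and |G : G*| ≤ 2, where |G : G*| = 2 holds if and only if G is transitive on V. -/

import Mathlib

def IsAutGroup {V : Type*} (Γ : SimpleGraph V) (G : Subgroup (Equiv.Perm V)) : Prop :=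
  ∀ g ∈ G, ∀ u v : V, Γ.Adj u v → Γ.Adj (g u) (g v)

def stabOf {V : Type*} (G : Subgroup (Equiv.Perm V)) (α : V) : Subgroup (Equiv.Perm V) :=
  G ⊓ MulAction.stabilizer (Equiv.Perm V) α

def TransOn {V : Type*} (H : Subgroup (Equiv.Perm V)) (S : Set V) : Prop :=
  ∀ x ∈ S, ∀ y ∈ S, ∃ g ∈ H, g x = y

def IsBlockOn {V : Type*} (H : Subgroup (Equiv.Perm V)) (S B : Set V) : Prop :=
  B ⊆ S ∧ ∀ g ∈ H, (⇑g '' B) = B ∨ Disjoint (⇑g '' B) B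

def PrimOn {V : Type*} (H : Subgroup (Equiv.Perm V)) (S : Set V) : Prop :=
  TransOn H S ∧ ∀ B : Set V, IsBlockOn H S B → B.Subsingleton ∨ B = S

def orbitOf {V : Type*} (H : Subgroup (Equiv.Perm V)) (γ : V) : Set V :=
  {v | ∃ g ∈ H, g γ = v}

def IsBipartition {V : Type*} (Γ : SimpleGraph V) (U W : Set V) : Prop :=
  (∀ v, (v ∈ U ↔ v ∉ W)) ∧ ∀ a b : V, Γ.Adj a b → (a ∈ U ∧ b ∈ W) ∨ (a ∈ W ∧ b ∈ U)

section Helpers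

variable {V : Type*} {Γ : SimpleGraph V} {G : Subgroup (Equiv.Perm V)}

lemma mem_stabOf' {α : V} {g : Equiv.Perm V} : g ∈ stabOf G α ↔ g ∈ G ∧ g α = α := by
  simp [stabOf, Subgroup.mem_inf, MulAction.mem_stabilizer_iff, Equiv.Perm.smul_def]

lemma adj_iff' (hG : IsAutGroup Γ G) {g : Equiv.Perm V} (hg : g ∈ G) {u v : V} :
    Γ.Adj (g u) (g v) ↔ Γ.Adj u v :=
  ⟨fun h => by simpa using hG g⁻¹ (inv_mem hg) _ _ h, hG g hg u v⟩

lemma mem_image_perm {g : Equiv.Perm V} {S : Set V} {v : V} :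
    v ∈ ⇑g '' S ↔ g⁻¹ v ∈ S := by
  constructor
  · rintro ⟨u, hu, rfl⟩; simpa
  · intro h; exact ⟨g⁻¹ v, h, by simp⟩

lemma image_neighborSet' (hG : IsAutGroup Γ G) {g : Equiv.Perm V} (hg : g ∈ G) (u : V) :
    ⇑g '' Γ.neighborSet u = Γ.neighborSet (g u) := by
  ext v
  rw [mem_image_perm]
  simp only [SimpleGraph.mem_neighborSet]
  constructor
  · intro h
    have := (adj_iff' hG hg (u := u) (v := g⁻¹ v)).mpr h
    simpa using this
  · intro h
    have := (adj_iff' hG (inv_mem hg) (u := g u) (v := v)).mpr h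
    simpa using this

def imageStab {V : Type*} (U : Set V) : Subgroup (Equiv.Perm V) where
  carrier := {g | ⇑g '' U = U}
  one_mem' := by simp
  mul_mem' := by
    intro a b ha hb
    show ⇑(a * b) '' U = U
    rw [Equiv.Perm.coe_mul, Set.image_comp, hb, ha]
  inv_mem' := by
    intro a ha
    show ⇑a⁻¹ '' U = U
    conv_lhs => rw [← ha]
    rw [← Set.image_comp]
    simp

lemma bipartition_image (hG : IsAutGroup Γ G) {g : Equiv.Perm V} (hg : g ∈ G)
    {U W : Set V} (h : IsBipartition Γ U W) : IsBipartition Γ (⇑g '' U) (⇑g '' W) := by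
  constructor
  · intro v
    rw [mem_image_perm, mem_image_perm]
    exact h.1 _
  · intro a b hab
    have h2 : Γ.Adj (g⁻¹ a) (g⁻¹ b) := by
      have := (adj_iff' hG (inv_mem hg) (u := a) (v := b)).mpr hab
      simpa using this
    rcases h.2 _ _ h2 with ⟨h3, h4⟩ | ⟨h3, h4⟩
    · exact Or.inl ⟨mem_image_perm.mpr h3, mem_image_perm.mpr h4⟩
    · exact Or.inr ⟨mem_image_perm.mpr h3, mem_image_perm.mpr h4⟩

lemma bipartition_unique (hconn : Γ.Connected) {U W U' W' : Set V}
    (h1 : IsBipartition Γ U W) (h2 : IsBipartition Γ U' W') :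
    (U' = U ∧ W' = W) ∨ (U' = W ∧ W' = U) := by
  have step : ∀ u v : V, Γ.Adj u v → ((u ∈ U ↔ u ∈ U') ↔ (v ∈ U ↔ v ∈ U')) := by
    intro u v h
    have c1 := h1.2 u v h
    have c2 := h2.2 u v h
    have d1 := h1.1 u; have d2 := h1.1 v; have d3 := h2.1 u; have d4 := h2.1 v
    tauto
  have main : ∀ u v : V, Γ.Walk u v → ((u ∈ U ↔ u ∈ U') ↔ (v ∈ U ↔ v ∈ U')) := by
    intro u v p
    induction p with
    | nil => exact Iff.rfl
    | cons h p ih => exact (step _ _ h).trans ih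
  obtain ⟨v₀⟩ := hconn.nonempty
  by_cases hP : (v₀ ∈ U ↔ v₀ ∈ U')
  · left
    have hall : ∀ v, v ∈ U ↔ v ∈ U' := fun v =>
      ((main v₀ v (hconn.preconnected v₀ v).some).mp hP)
    constructor
    · ext v; exact (hall v).symm
    · ext v
      have := h1.1 v; have := h2.1 v; have := hall v; tauto
  · right
    have hall : ∀ v, ¬(v ∈ U ↔ v ∈ U') := fun v hv =>
      hP ((main v₀ v (hconn.preconnected v₀ v).some).mpr hv)
    constructor
    · ext v
      have := h1.1 v; have := h2.1 v; have := hall v; tauto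
    · ext v
      have := h1.1 v; have := h2.1 v; have := hall v; tauto

end Helpers

section Transfer

variable {V : Type*} {Γ : SimpleGraph V} {G Gstar : Subgroup (Equiv.Perm V)}

lemma trans_transfer (hG : IsAutGroup Γ G) (hle : Gstar ≤ G) {δ γ : V} {g : Equiv.Perm V}
    (hg : g ∈ Gstar) (hgδ : g δ = γ) (hsδ : stabOf G δ ≤ Gstar)
    (ht : TransOn (stabOf G δ) (Γ.neighborSet δ)) :
    TransOn (stabOf Gstar γ) (Γ.neighborSet γ) := by
  intro x hx y hy
  have hgG : g ∈ G := hle hg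
  have hx' : g⁻¹ x ∈ Γ.neighborSet δ := by
    rw [SimpleGraph.mem_neighborSet] at hx ⊢
    have := (adj_iff' hG (inv_mem hgG) (u := γ) (v := x)).mpr hx
    rwa [← hgδ, ← Equiv.Perm.mul_apply, inv_mul_cancel, Equiv.Perm.one_apply] at this
  have hy' : g⁻¹ y ∈ Γ.neighborSet δ := by
    rw [SimpleGraph.mem_neighborSet] at hy ⊢
    have := (adj_iff' hG (inv_mem hgG) (u := γ) (v := y)).mpr hy
    rwa [← hgδ, ← Equiv.Perm.mul_apply, inv_mul_cancel, Equiv.Perm.one_apply] at this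
  obtain ⟨h, hh, hhxy⟩ := ht _ hx' _ hy'
  refine ⟨g * h * g⁻¹, ?_, ?_⟩
  · rw [mem_stabOf']
    refine ⟨mul_mem (mul_mem hg (hsδ hh)) (inv_mem hg), ?_⟩
    have hδ : h δ = δ := (mem_stabOf'.mp hh).2
    simp [Equiv.Perm.mul_apply, ← hgδ, hδ]
  · rw [Equiv.Perm.mul_apply, Equiv.Perm.mul_apply, hhxy]; simp

lemma prim_transfer (hG : IsAutGroup Γ G) (hle : Gstar ≤ G) {δ γ : V} {g : Equiv.Perm V}
    (hg : g ∈ Gstar) (hgδ : g δ = γ) (hsδ : stabOf G δ ≤ Gstar)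
    (hp : PrimOn (stabOf G δ) (Γ.neighborSet δ)) :
    PrimOn (stabOf Gstar γ) (Γ.neighborSet γ) := by
  have hgG : g ∈ G := hle hg
  refine ⟨trans_transfer hG hle hg hgδ hsδ hp.1, ?_⟩
  intro B hB
  set B' : Set V := ⇑g⁻¹ '' B with hB'def
  have hBB' : ⇑g '' B' = B := by
    rw [hB'def, ← Set.image_comp]
    simp
  have hB'block : IsBlockOn (stabOf G δ) (Γ.neighborSet δ) B' := by
    constructor
    · intro x hx
      obtain ⟨b, hb, rfl⟩ := hx
      have hbn : b ∈ Γ.neighborSet γ := hB.1 hb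
      rw [SimpleGraph.mem_neighborSet] at hbn ⊢
      have := (adj_iff' hG (inv_mem hgG) (u := γ) (v := b)).mpr hbn
      rwa [← hgδ, ← Equiv.Perm.mul_apply, inv_mul_cancel, Equiv.Perm.one_apply] at this
    · intro h hh
      set k : Equiv.Perm V := g * h * g⁻¹ with hk
      have hkmem : k ∈ stabOf Gstar γ := by
        rw [mem_stabOf']
        refine ⟨mul_mem (mul_mem hg (hsδ hh)) (inv_mem hg), ?_⟩
        have hδ : h δ = δ := (mem_stabOf'.mp hh).2
        simp [hk, Equiv.Perm.mul_apply, ← hgδ, hδ]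
      have him : ⇑h '' B' = ⇑g⁻¹ '' (⇑k '' B) := by
        rw [hB'def, ← Set.image_comp, ← Set.image_comp]
        apply Set.image_congr'
        intro x
        simp [hk, Equiv.Perm.mul_apply]
      rcases hB.2 k hkmem with heq | hdisj
      · left; rw [him, heq]
      · right
        rw [him, hB'def]
        exact Set.disjoint_image_of_injective (Equiv.injective _) hdisj
  rcases hp.2 B' hB'block with hsub | heq
  · left
    rw [← hBB']
    exact hsub.image _
  · right
    rw [← hBB', heq, image_neighborSet' hG hgG, hgδ]

end Transfer


/-- **Lemma 2.1 (tech-1).** For a finite connected graph `Γ`, an edge `{α,β}`, a group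
`G ≤ Aut Γ` whose stabilizers `G_α`, `G_β` act transitively on the respective neighbourhoods,
and `G* = ⟨G_α, G_β⟩`: (a) `Γ` is `G*`-locally arc-transitive; (b) `Γ` is `G*`-locally
primitive iff `G_α`, `G_β` act primitively on `Γ(α)`, `Γ(β)`; (c) either `Γ` is not
bipartite, `G = G*` and `G` is transitive on `V`, or `Γ` is bipartite with parts the two
`G*`-orbits, and `|G : G*| ≤ 2` with equality iff `G` is transitive on `V`. -/
theorem stmt_3 {V : Type*} [Finite V] (Γ : SimpleGraph V) (G Gstar : Subgroup (Equiv.Perm V))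
    (α β : V)
    (hconn : Γ.Connected) (hadj : Γ.Adj α β) (hG : IsAutGroup Γ G)
    (hGstar : Gstar = stabOf G α ⊔ stabOf G β)
    (htα : TransOn (stabOf G α) (Γ.neighborSet α))
    (htβ : TransOn (stabOf G β) (Γ.neighborSet β)) :
    (∀ γ : V, TransOn (stabOf Gstar γ) (Γ.neighborSet γ)) ∧
    ((∀ γ : V, PrimOn (stabOf Gstar γ) (Γ.neighborSet γ)) ↔
      (PrimOn (stabOf G α) (Γ.neighborSet α) ∧ PrimOn (stabOf G β) (Γ.neighborSet β))) ∧
    (((¬ ∃ U W : Set V, IsBipartition Γ U W) ∧ G = Gstar ∧ TransOn G Set.univ) ∨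
      (IsBipartition Γ (orbitOf Gstar α) (orbitOf Gstar β) ∧
        Subgroup.relIndex Gstar G ≤ 2 ∧
        (Subgroup.relIndex Gstar G = 2 ↔ TransOn G Set.univ))) := by
  have hle : Gstar ≤ G := by
    rw [hGstar]; exact sup_le inf_le_left inf_le_left
  have hsα : stabOf G α ≤ Gstar := hGstar ▸ le_sup_left
  have hsβ : stabOf G β ≤ Gstar := hGstar ▸ le_sup_right
  have horbα : α ∈ orbitOf Gstar α := ⟨1, one_mem _, rfl⟩
  have horbβ : β ∈ orbitOf Gstar β := ⟨1, one_mem _, rfl⟩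
  -- orbit closure under Gstar
  have hmul : ∀ (δ : V) (g : Equiv.Perm V) (v : V), g ∈ Gstar → v ∈ orbitOf Gstar δ →
      g v ∈ orbitOf Gstar δ := by
    rintro δ g v hg ⟨h, hh, rfl⟩
    exact ⟨g * h, mul_mem hg hh, by simp [Equiv.Perm.mul_apply]⟩
  -- neighbours of orbit elements
  have hstep : ∀ (δ ε : V), Γ.Adj δ ε → TransOn (stabOf G δ) (Γ.neighborSet δ) →
      stabOf G δ ≤ Gstar →
      ∀ v w, v ∈ orbitOf Gstar δ → Γ.Adj v w → w ∈ orbitOf Gstar ε := by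
    rintro δ ε hδε htδ hsδ v w ⟨g, hg, rfl⟩ hvw
    have hgG : g ∈ G := hle hg
    have h1 : Γ.Adj δ (g⁻¹ w) := by
      have := (adj_iff' hG (inv_mem hgG) (u := g δ) (v := w)).mpr hvw
      simpa using this
    obtain ⟨h, hh, hhw⟩ := htδ ε hδε (g⁻¹ w) h1
    refine ⟨g * h, mul_mem hg (hsδ hh), ?_⟩
    simp [Equiv.Perm.mul_apply, hhw]
  have hstepα := hstep α β hadj htα hsα
  have hstepβ := hstep β α hadj.symm htβ hsβ
  have key : ∀ (u v : V), Γ.Walk u v →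
      (u ∈ orbitOf Gstar α ∨ u ∈ orbitOf Gstar β) →
      (v ∈ orbitOf Gstar α ∨ v ∈ orbitOf Gstar β) := by
    intro u v p
    induction p with
    | nil => exact id
    | cons h p ih =>
        intro hu
        apply ih
        rcases hu with h1 | h1
        · exact Or.inr (hstepα _ _ h1 h)
        · exact Or.inl (hstepβ _ _ h1 h)
  have hcover : ∀ v, v ∈ orbitOf Gstar α ∨ v ∈ orbitOf Gstar β := fun v =>
    key α v (hconn.preconnected α v).some (Or.inl horbα)
  -- Part (a)
  have parta : ∀ γ : V, TransOn (stabOf Gstar γ) (Γ.neighborSet γ) := by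
    intro γ
    rcases hcover γ with ⟨g, hg, hgγ⟩ | ⟨g, hg, hgγ⟩
    · exact trans_transfer hG hle hg hgγ hsα htα
    · exact trans_transfer hG hle hg hgγ hsβ htβ
  -- stabilizers of α, β in Gstar equal those in G
  have stabeq : ∀ δ : V, stabOf G δ ≤ Gstar → stabOf Gstar δ = stabOf G δ := by
    intro δ hδ
    apply le_antisymm
    · exact inf_le_inf_right _ hle
    · exact le_inf hδ inf_le_right
  -- Part (b)
  have partb : (∀ γ : V, PrimOn (stabOf Gstar γ) (Γ.neighborSet γ)) ↔
      (PrimOn (stabOf G α) (Γ.neighborSet α) ∧ PrimOn (stabOf G β) (Γ.neighborSet β)) := by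
    constructor
    · intro hall
      constructor
      · have := hall α; rwa [stabeq α hsα] at this
      · have := hall β; rwa [stabeq β hsβ] at this
    · rintro ⟨hpα, hpβ⟩ γ
      rcases hcover γ with ⟨g, hg, hgγ⟩ | ⟨g, hg, hgγ⟩
      · exact prim_transfer hG hle hg hgγ hsα hpα
      · exact prim_transfer hG hle hg hgγ hsβ hpβ
  refine ⟨parta, partb, ?_⟩
  -- Part (c)
  by_cases hβOα : β ∈ orbitOf Gstar α
  · -- non-bipartite case
    left
    obtain ⟨m, hm, hmβ⟩ := hβOα
    have hOβα : orbitOf Gstar β ⊆ orbitOf Gstar α := by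
      rintro v ⟨k, hk, rfl⟩
      exact ⟨k * m, mul_mem hk hm, by simp [Equiv.Perm.mul_apply, hmβ]⟩
    have hV : ∀ v, v ∈ orbitOf Gstar α := fun v =>
      (hcover v).elim id (fun h => hOβα h)
    have hGsub : G ≤ Gstar := by
      intro g hg
      obtain ⟨h, hh, hhα⟩ := hV (g α)
      have hmem : h⁻¹ * g ∈ stabOf G α := by
        rw [mem_stabOf']
        exact ⟨mul_mem (inv_mem (hle hh)) hg, by simp [Equiv.Perm.mul_apply, ← hhα]⟩
      have : h * (h⁻¹ * g) ∈ Gstar := mul_mem hh (hsα hmem)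
      rwa [mul_inv_cancel_left] at this
    have htransG : TransOn G Set.univ := by
      intro x _ y _
      obtain ⟨h1, hh1, hh1α⟩ := hV x
      obtain ⟨h2, hh2, hh2α⟩ := hV y
      refine ⟨h2 * h1⁻¹, mul_mem (hle hh2) (inv_mem (hle hh1)), ?_⟩
      simp [Equiv.Perm.mul_apply, ← hh1α, hh2α]
    refine ⟨?_, le_antisymm hGsub hle, htransG⟩
    rintro ⟨U, W, hUW⟩
    -- every element of Gstar preserves U
    have hpres : ∀ δ : V, ∀ h : Equiv.Perm V, h ∈ stabOf G δ → ⇑h '' U = U := by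
      intro δ h hh
      have hhG : h ∈ G := (mem_stabOf'.mp hh).1
      have hhδ : h δ = δ := (mem_stabOf'.mp hh).2
      have hbip' := bipartition_image hG hhG hUW
      rcases bipartition_unique hconn hbip' hUW with ⟨e1, e2⟩ | ⟨e1, e2⟩
      · exact e1.symm
      · exfalso
        by_cases hδU : δ ∈ U
        · have hmem : δ ∈ ⇑h '' U := ⟨δ, hδU, hhδ⟩
          rw [← e2] at hmem
          exact (hUW.1 δ).mp hδU hmem
        · have hδW : δ ∈ W := by have := hUW.1 δ; tauto
          have hmem : δ ∈ ⇑h '' W := ⟨δ, hδW, hhδ⟩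
          rw [← e1] at hmem
          exact (hUW.1 δ).mp hmem hδW
    have hGstarPres : Gstar ≤ imageStab U := by
      rw [hGstar]
      exact sup_le (fun h hh => hpres α h hh) (fun h hh => hpres β h hh)
    -- derive contradiction
    have hpresW : ∀ g : Equiv.Perm V, g ∈ Gstar → ⇑g '' W = W := by
      intro g hg
      have hU : ⇑g '' U = U := hGstarPres hg
      ext v
      rw [mem_image_perm]
      have h1 := hUW.1 (g⁻¹ v)
      have h2 := hUW.1 v
      have h3 : g⁻¹ v ∈ U ↔ v ∈ U := by
        conv_rhs => rw [← hU]
        rw [mem_image_perm]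
      tauto
    by_cases hαU : α ∈ U
    · have hβU : β ∈ U := by
        obtain ⟨k, hk, hkα⟩ := hV β
        have : β ∈ ⇑k '' U := ⟨α, hαU, hkα⟩
        rwa [hGstarPres hk] at this
      rcases hUW.2 α β hadj with ⟨_, hc⟩ | ⟨hc, _⟩
      · exact (hUW.1 β).mp hβU hc
      · exact (hUW.1 α).mp hαU hc
    · have hαW : α ∈ W := by have := hUW.1 α; tauto
      have hβW : β ∈ W := by
        obtain ⟨k, hk, hkα⟩ := hV β
        have : β ∈ ⇑k '' W := ⟨α, hαW, hkα⟩
        rwa [hpresW k hk] at this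
      rcases hUW.2 α β hadj with ⟨hc, _⟩ | ⟨_, hc⟩
      · exact (hUW.1 α).mp hc hαW
      · exact (hUW.1 β).mp hc hβW
  · -- bipartite case
    right
    have hbip : IsBipartition Γ (orbitOf Gstar α) (orbitOf Gstar β) := by
      constructor
      · intro v
        constructor
        · rintro ⟨g, hg, rfl⟩ ⟨h, hh, hhβ⟩
          exact hβOα ⟨h⁻¹ * g, mul_mem (inv_mem hh) hg,
            by simp [Equiv.Perm.mul_apply, ← hhβ]⟩
        · intro h
          rcases hcover v with h1 | h1
          · exact h1
          · exact absurd h1 h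
      · intro a b hab
        rcases hcover a with h1 | h1
        · exact Or.inl ⟨h1, hstepα _ _ h1 hab⟩
        · exact Or.inr ⟨h1, hstepβ _ _ h1 hab⟩
    have hcharα : ∀ g : Equiv.Perm V, g ∈ G → (g ∈ Gstar ↔ g α ∈ orbitOf Gstar α) := by
      intro g hgG
      constructor
      · intro hg; exact hmul α g α hg horbα
      · rintro ⟨h, hh, hhα⟩
        have hmem : h⁻¹ * g ∈ stabOf G α := by
          rw [mem_stabOf']
          exact ⟨mul_mem (inv_mem (hle hh)) hgG, by simp [Equiv.Perm.mul_apply, ← hhα]⟩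
        have := mul_mem hh (hsα hmem)
        rwa [mul_inv_cancel_left] at this
    have hdich : ∀ g : Equiv.Perm V, g ∈ G → g α ∈ orbitOf Gstar β →
        (⇑g '' orbitOf Gstar α = orbitOf Gstar β ∧
         ⇑g '' orbitOf Gstar β = orbitOf Gstar α) := by
      intro g hgG hgα
      have hbip' := bipartition_image hG hgG hbip
      rcases bipartition_unique hconn hbip' hbip with ⟨e1, e2⟩ | ⟨e1, e2⟩
      · exfalso
        have hm2 : g α ∈ ⇑g '' orbitOf Gstar α := ⟨α, horbα, rfl⟩
        rw [← e1] at hm2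
        exact (hbip.1 (g α)).mp hm2 hgα
      · exact ⟨e2.symm, e1.symm⟩
    by_cases hex : ∃ g ∈ G, g α ∈ orbitOf Gstar β
    · obtain ⟨g, hgG, hgβ⟩ := hex
      have hdg := hdich g hgG hgβ
      have horbitG : ∀ v, ∃ k ∈ G, k α = v := by
        intro v
        rcases hcover v with ⟨h, hh, hhα⟩ | h1
        · exact ⟨h, hle hh, hhα⟩
        · rw [← hdg.1] at h1
          obtain ⟨u, ⟨h, hh, rfl⟩, rfl⟩ := h1
          exact ⟨g * h, mul_mem hgG (hle hh), by simp [Equiv.Perm.mul_apply]⟩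
      have htransG : TransOn G Set.univ := by
        intro x _ y _
        obtain ⟨k1, hk1, hk1α⟩ := horbitG x
        obtain ⟨k2, hk2, hk2α⟩ := horbitG y
        exact ⟨k2 * k1⁻¹, mul_mem hk2 (inv_mem hk1),
          by simp [Equiv.Perm.mul_apply, ← hk1α, hk2α]⟩
      have hidx : Subgroup.relIndex Gstar G = 2 := by
        show (Gstar.subgroupOf G).index = 2
        rw [Subgroup.index_eq_two_iff]
        refine ⟨⟨g, hgG⟩, ?_⟩
        rintro ⟨b, hbG⟩
        simp only [Xor', Subgroup.mem_subgroupOf, MulMemClass.mk_mul_mk]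
        by_cases hb : b ∈ Gstar
        · refine Or.inr ⟨hb, ?_⟩
          intro hbg
          have hgmem : g ∈ Gstar := by
            have := mul_mem (inv_mem hb) hbg
            rwa [inv_mul_cancel_left] at this
          have := (hcharα g hgG).mp hgmem
          exact (hbip.1 (g α)).mp this hgβ
        · refine Or.inl ⟨?_, hb⟩
          have hbβ : b α ∈ orbitOf Gstar β := by
            rcases hcover (b α) with h1 | h1
            · exact absurd ((hcharα b hbG).mpr h1) hb
            · exact h1
          have hdb := hdich b hbG hbβ
          apply (hcharα (b * g) (mul_mem hbG hgG)).mpr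
          have heq : (b * g) α = b (g α) := Equiv.Perm.mul_apply ..
          rw [heq, ← hdb.2]
          exact ⟨g α, hgβ, rfl⟩
      exact ⟨hbip, hidx.le, ⟨fun _ => htransG, fun _ => hidx⟩⟩
    · have hGeq : Gstar = G := by
        apply le_antisymm hle
        intro g hgG
        apply (hcharα g hgG).mpr
        rcases hcover (g α) with h1 | h1
        · exact h1
        · exact absurd ⟨g, hgG, h1⟩ hex
      refine ⟨hbip, ?_, ?_⟩
      · rw [hGeq, Subgroup.relIndex_self]
        norm_num
      · rw [hGeq, Subgroup.relIndex_self]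
        constructor
        · intro h; exact absurd h (by norm_num)
        · intro htr
          exfalso
          obtain ⟨g, hgG, hgα⟩ := htr α (Set.mem_univ _) β (Set.mem_univ _)
          exact hex ⟨g, hgG, by rw [hgα]; exact horbβ⟩
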